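/- Let 𝕂 = ℝ or ℂ and let k be an odd positive integer. There are no formal power series x(t), y(t), z(t) ∈ 𝕂⟦t⟧ with x(t) ≡ t (mod t²), y(t) ≡ 0 (mod t²), and z(t) ≡ 0 (mod t²) such that z(t)² = x(t)·(y(t)⁴ + x(t)^{2k}). In particular, the truncation at order 1 of the arc t ↦ (t,0,0), which lies on X = {(x,y,z) : z² − xy⁴ = 0}, is not the truncation at order 1 of any analytic arc lying on X_k = {(x,y,z) : z² − x(y⁴ + x^{2k}) = 0}. -/

import Mathlib

open Set

section Aux

open PowerSeries

lemma ps_order_pow {𝕜 : Type*} [Field 𝕜] (φ : PowerSeries 𝕜) (j n : ℕ)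
    (h : φ.order = (n : ℕ∞)) : (φ ^ j).order = ((j * n : ℕ) : ℕ∞) := by
  induction j with
  | zero => simp
  | succ j ih =>
      rw [pow_succ, PowerSeries.order_mul, ih, h]
      push_cast; ring

lemma part1 {𝕜 : Type*} [Field 𝕜] (k : ℕ) (hk : Odd k) (hk1 : 1 ≤ k) :
    ¬ ∃ x y z : PowerSeries 𝕜,
        PowerSeries.coeff (R := 𝕜) 0 x = 0 ∧ PowerSeries.coeff (R := 𝕜) 1 x = 1 ∧
        PowerSeries.coeff (R := 𝕜) 0 y = 0 ∧ PowerSeries.coeff (R := 𝕜) 1 y = 0 ∧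
        PowerSeries.coeff (R := 𝕜) 0 z = 0 ∧ PowerSeries.coeff (R := 𝕜) 1 z = 0 ∧
        z ^ 2 = x * (y ^ 4 + x ^ (2 * k)) := by
  rintro ⟨x, y, z, hx0, hx1, hy0, hy1, hz0, hz1, heq⟩
  obtain ⟨r, hr⟩ := hk
  have hxord : x.order = ((1 : ℕ) : ℕ∞) := by
    rw [PowerSeries.order_eq_nat]
    refine ⟨by rw [hx1]; exact one_ne_zero, ?_⟩
    intro i hi
    interval_cases i
    exact hx0
  have hx2k : (x ^ (2 * k)).order = ((2 * k : ℕ) : ℕ∞) := by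
    simpa using ps_order_pow x (2 * k) 1 hxord
  obtain ⟨n, hSord⟩ : ∃ n : ℕ, (y ^ 4 + x ^ (2 * k)).order = ((2 * n : ℕ) : ℕ∞) := by
    by_cases hy : y = 0
    · refine ⟨k, ?_⟩
      rw [hy]
      simpa using hx2k
    · have hyo : y.order ≠ ⊤ := by
        simpa [PowerSeries.order_eq_top] using hy
      obtain ⟨j, hj⟩ : ∃ j : ℕ, y.order = (j : ℕ∞) := by
        cases hyy : y.order with
        | top => exact absurd hyy hyo
        | coe j => exact ⟨j, rfl⟩
      have hy4 : (y ^ 4).order = ((4 * j : ℕ) : ℕ∞) := ps_order_pow y 4 j hj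
      have hne : (y ^ 4).order ≠ (x ^ (2 * k)).order := by
        rw [hy4, hx2k]
        intro h
        have : 4 * j = 2 * k := Nat.cast_injective h
        omega
      refine ⟨min (2 * j) k, ?_⟩
      rw [PowerSeries.order_add_of_order_ne _ _ hne, hy4, hx2k]
      have hmin : min (4 * j) (2 * k) = 2 * min (2 * j) k := by omega
      rw [← hmin]
      norm_cast
  have hzord : (z ^ 2).order = ((2 * n + 1 : ℕ) : ℕ∞) := by
    rw [heq, PowerSeries.order_mul, hxord, hSord]
    push_cast; ring
  have hz : z ≠ 0 := by
    rintro rfl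
    rw [zero_pow (by norm_num), PowerSeries.order_zero] at hzord
    exact (ENat.top_ne_coe _) hzord
  obtain ⟨p, hp⟩ : ∃ p : ℕ, z.order = (p : ℕ∞) := by
    cases hzz : z.order with
    | top => exact absurd (PowerSeries.order_eq_top.mp hzz) hz
    | coe p => exact ⟨p, rfl⟩
  have : ((2 * p : ℕ) : ℕ∞) = ((2 * n + 1 : ℕ) : ℕ∞) := by
    rw [← ps_order_pow z 2 p hp, hzord]
  have h2 : 2 * p = 2 * n + 1 := Nat.cast_injective this
  omega


open Filter Set
open scoped Topology

variable {𝕜 : Type*} [RCLike 𝕜]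

/-- `f` vanishes to exact order `n` at `0`. -/
def VO (f : ℝ → 𝕜) (n : ℕ) : Prop :=
  ∃ g : ℝ → 𝕜, AnalyticAt ℝ g 0 ∧ g 0 ≠ 0 ∧ ∀ᶠ t in 𝓝 (0 : ℝ), f t = t ^ n • g t

lemma VO.congr {f f' : ℝ → 𝕜} {n : ℕ} (h : VO f n) (hff' : ∀ᶠ t in 𝓝 (0:ℝ), f t = f' t) :
    VO f' n := by
  obtain ⟨g, hg, hg0, hfg⟩ := h
  exact ⟨g, hg, hg0, by filter_upwards [hfg, hff'] with t h1 h2; rw [← h2, h1]⟩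

lemma VO.mul {f f' : ℝ → 𝕜} {m n : ℕ} (h : VO f m) (h' : VO f' n) :
    VO (fun t => f t * f' t) (m + n) := by
  obtain ⟨g, hg, hg0, hfg⟩ := h
  obtain ⟨g', hg', hg0', hfg'⟩ := h'
  refine ⟨fun t => g t * g' t, hg.mul hg', mul_ne_zero hg0 hg0', ?_⟩
  filter_upwards [hfg, hfg'] with t h1 h2
  rw [h1, h2, smul_mul_smul_comm, pow_add]

lemma VO.pow {f : ℝ → 𝕜} {m : ℕ} (h : VO f m) (j : ℕ) :
    VO (fun t => f t ^ j) (j * m) := by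
  induction j with
  | zero =>
      exact ⟨fun _ => 1, analyticAt_const, one_ne_zero, by simp⟩
  | succ j ih =>
      have h2 : VO (fun t => f t ^ (j + 1)) (j * m + m) :=
        (ih.mul h).congr (Eventually.of_forall fun t => (pow_succ (f t) j).symm)
      simpa [Nat.succ_mul] using h2

lemma VO.add {f f' : ℝ → 𝕜} {m n : ℕ} (h : VO f m) (h' : VO f' n) (hmn : m < n) :
    VO (fun t => f t + f' t) m := by
  obtain ⟨g, hg, hg0, hfg⟩ := h
  obtain ⟨g', hg', hg0', hfg'⟩ := h'
  refine ⟨fun t => g t + t ^ (n - m) • g' t, ?_, ?_, ?_⟩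
  · exact hg.add (((analyticAt_id (𝕜 := ℝ) (z := (0:ℝ)) (E := ℝ)).pow (n - m)).smul hg')
  · simpa [zero_pow (Nat.sub_ne_zero_of_lt hmn)] using hg0
  · filter_upwards [hfg, hfg'] with t h1 h2
    rw [h1, h2, smul_add, smul_smul, ← pow_add, Nat.add_sub_cancel' hmn.le]

/-- An analytic function either vanishes near 0 or has an exact vanishing order. -/
lemma VO.exists_or {f : ℝ → 𝕜} (hf : AnalyticAt ℝ f 0) :
    (∀ᶠ t in 𝓝 (0:ℝ), f t = 0) ∨ ∃ n, VO f n := by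
  by_cases h : ∀ᶠ t in 𝓝 (0:ℝ), f t = 0
  · exact Or.inl h
  · obtain ⟨n, g, hg, hg0, hfg⟩ := hf.exists_eventuallyEq_pow_smul_nonzero_iff.mpr h
    exact Or.inr ⟨n, g, hg, hg0, by simpa using hfg⟩

lemma VO.unique {f : ℝ → 𝕜} {m n : ℕ} (h : VO f m) (h' : VO f n) : m = n := by
  apply AnalyticAt.unique_eventuallyEq_pow_smul_nonzero (f := f) (z₀ := (0:ℝ))
  · obtain ⟨g, hg, hg0, hfg⟩ := h
    exact ⟨g, hg, hg0, by simpa using hfg⟩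
  · obtain ⟨g, hg, hg0, hfg⟩ := h'
    exact ⟨g, hg, hg0, by simpa using hfg⟩

theorem part2 (k : ℕ) (hk : Odd k) (hk1 : 1 ≤ k) :
    ¬ ∃ (ε : ℝ) (γ : ℝ → Fin 3 → 𝕜), 0 < ε ∧
        AnalyticOnNhd ℝ γ (Set.Ioo (-ε) ε) ∧
        γ 0 = 0 ∧
        deriv γ 0 = (fun i => if i = 0 then 1 else 0) ∧
        (∀ t ∈ Set.Ioo (-ε) ε,
          (γ t 2) ^ 2 = γ t 0 * ((γ t 1) ^ 4 + (γ t 0) ^ (2 * k))) := by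
  rintro ⟨ε, γ, hε, hγ, hγ0, hγd, heqn⟩
  obtain ⟨r, hr⟩ := hk
  have hmem : Set.Ioo (-ε) ε ∈ 𝓝 (0:ℝ) := Ioo_mem_nhds (by linarith) hε
  have hγa : AnalyticAt ℝ γ 0 := hγ 0 ⟨by linarith, hε⟩
  set a : ℝ → 𝕜 := fun t => γ t 0 with ha_def
  set b : ℝ → 𝕜 := fun t => γ t 1 with hb_def
  set c : ℝ → 𝕜 := fun t => γ t 2 with hc_def
  have hcomp : ∀ i : Fin 3, AnalyticAt ℝ (fun t => γ t i) 0 := by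
    intro i
    exact ((ContinuousLinearMap.proj (R := ℝ) (φ := fun _ : Fin 3 => 𝕜) i).analyticAt
      (γ 0)).comp hγa
  have haA : AnalyticAt ℝ a 0 := hcomp 0
  have hbA : AnalyticAt ℝ b 0 := hcomp 1
  have hcA : AnalyticAt ℝ c 0 := hcomp 2
  have ha0 : a 0 = 0 := by simp [ha_def, hγ0]
  have hda : deriv a 0 = 1 := by
    have hd : HasDerivAt γ (deriv γ 0) 0 := hγa.differentiableAt.hasDerivAt
    have h2 : HasDerivAt a (deriv γ 0 0) 0 := by
      have := ((ContinuousLinearMap.proj (R := ℝ) (φ := fun _ : Fin 3 => 𝕜)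
        (0 : Fin 3)).hasFDerivAt).comp_hasDerivAt 0 hd
      exact this
    rw [h2.deriv, hγd]
    simp
  -- a vanishes to exact order 1
  have hWa : VO a 1 := by
    rcases VO.exists_or haA with h | ⟨n, hn⟩
    · exfalso
      have : deriv a 0 = 0 := by
        have : deriv a 0 = deriv (fun _ : ℝ => (0:𝕜)) 0 := Filter.EventuallyEq.deriv_eq h
        simpa using this
      rw [hda] at this
      exact one_ne_zero this
    · obtain ⟨g, hg, hg0, hfg⟩ := hn
      have hn1 : n = 1 := by
        by_contra hne
        rcases Nat.lt_or_ge n 1 with h1 | h1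
        · interval_cases n
          have := hfg.self_of_nhds
          simp [ha0] at this
          exact hg0 this.symm
        · have h2 : 2 ≤ n := by omega
          have hD : HasDerivAt (fun t : ℝ => t ^ n • g t)
              ((0:ℝ) ^ n • deriv g 0 + ((n : ℝ) * 0 ^ (n - 1)) • g 0) 0 :=
            (hasDerivAt_pow n 0).smul (hg.differentiableAt.hasDerivAt)
          have hz : ((0:ℝ) ^ n • deriv g 0 + ((n : ℝ) * 0 ^ (n - 1)) • g 0) = 0 := by
            rw [zero_pow (by omega), zero_pow (by omega : n - 1 ≠ 0)]
            simp
          have : deriv a 0 = 0 := by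
            rw [Filter.EventuallyEq.deriv_eq hfg]
            rw [hz] at hD
            exact hD.deriv
          rw [hda] at this
          exact one_ne_zero this
      rw [hn1] at hfg
      exact ⟨g, hg, hg0, hfg⟩
  have hWa2k : VO (fun t => a t ^ (2 * k)) (2 * k) := by
    simpa using hWa.pow (2 * k)
  -- the factor y⁴ + x^{2k} vanishes to even exact order
  obtain ⟨n, hWS⟩ : ∃ n, VO (fun t => b t ^ 4 + a t ^ (2 * k)) (2 * n) := by
    rcases VO.exists_or hbA with h | ⟨m, hm⟩
    · refine ⟨k, hWa2k.congr ?_⟩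
      filter_upwards [h] with t ht
      rw [ht]
      simp
    · have hWb4 : VO (fun t => b t ^ 4) (4 * m) := hm.pow 4
      have hne : 4 * m ≠ 2 * k := by omega
      rcases Nat.lt_or_ge (4 * m) (2 * k) with hlt | hge
      · exact ⟨2 * m, by simpa [show 4 * m = 2 * (2 * m) by ring] using hWb4.add hWa2k hlt⟩
      · have hlt : 2 * k < 4 * m := by omega
        refine ⟨k, (hWa2k.add hWb4 hlt).congr ?_⟩
        exact Eventually.of_forall fun t => add_comm _ _
  have hWrhs : VO (fun t => a t * (b t ^ 4 + a t ^ (2 * k))) (1 + 2 * n) := hWa.mul hWS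
  have heq' : ∀ᶠ t in 𝓝 (0:ℝ), c t ^ 2 = a t * (b t ^ 4 + a t ^ (2 * k)) :=
    eventually_of_mem hmem fun t ht => heqn t ht
  have hWc2 : VO (fun t => c t ^ 2) (1 + 2 * n) := hWrhs.congr (by filter_upwards [heq'] with t h; rw [h])
  rcases VO.exists_or hcA with h | ⟨p, hp⟩
  · -- c vanishes identically near 0, but RHS has finite order: contradiction
    obtain ⟨g, hg, hg0, hfg⟩ := hWc2
    have hgne : ∀ᶠ t in 𝓝 (0:ℝ), g t ≠ 0 := hg.continuousAt.eventually_ne hg0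
    have hall : ∀ᶠ t in 𝓝[≠] (0:ℝ), False := by
      have hev : ∀ᶠ t in 𝓝 (0:ℝ), c t = 0 ∧ c t ^ 2 = t ^ (1 + 2*n) • g t ∧ g t ≠ 0 :=
        h.and (hfg.and hgne)
      filter_upwards [hev.filter_mono nhdsWithin_le_nhds, self_mem_nhdsWithin] with t ht htne
      obtain ⟨h1, h2, h3⟩ := ht
      rw [h1] at h2
      simp only [ne_eq, zero_pow, OfNat.ofNat_ne_zero, not_false_eq_true] at h2
      have : (t : ℝ) ^ (1 + 2*n) = 0 ∨ g t = 0 := by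
        rcases smul_eq_zero.mp h2.symm with h | h
        · exact Or.inl h
        · exact Or.inr h
      rcases this with h | h
      · exact htne (pow_eq_zero_iff (by omega)|>.mp h)
      · exact h3 h
    exact (hall.exists).elim fun _ h => h
  · have hWc2' : VO (fun t => c t ^ 2) (2 * p) := hp.pow 2
    have := hWc2'.unique hWc2
    omega

end Aux

/-- **No formal solution** (`𝕜 = ℝ` or `ℂ`): for odd `k ≥ 1` there are no formal power
series `x(t) ≡ t`, `y(t) ≡ 0`, `z(t) ≡ 0 (mod t²)` with `z² = x·(y⁴ + x^{2k})`.
In particular the order-1 truncation `t ↦ (t,0,0)` of an arc on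
`X = {z² = x y⁴}` is not the order-1 truncation of any analytic arc on
`X_k = {z² = x (y⁴ + x^{2k})}`. -/
theorem no_formal_arc_on_Xk {𝕜 : Type*} [RCLike 𝕜] (k : ℕ) (hk : Odd k) (hk1 : 1 ≤ k) :
    (¬ ∃ x y z : PowerSeries 𝕜,
        PowerSeries.coeff (R := 𝕜) 0 x = 0 ∧ PowerSeries.coeff (R := 𝕜) 1 x = 1 ∧
        PowerSeries.coeff (R := 𝕜) 0 y = 0 ∧ PowerSeries.coeff (R := 𝕜) 1 y = 0 ∧
        PowerSeries.coeff (R := 𝕜) 0 z = 0 ∧ PowerSeries.coeff (R := 𝕜) 1 z = 0 ∧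
        z ^ 2 = x * (y ^ 4 + x ^ (2 * k)))
    ∧
    (¬ ∃ (ε : ℝ) (γ : ℝ → Fin 3 → 𝕜), 0 < ε ∧
        AnalyticOnNhd ℝ γ (Set.Ioo (-ε) ε) ∧
        γ 0 = 0 ∧
        -- the truncation of γ at order 1 is the arc t ↦ (t, 0, 0)
        deriv γ 0 = (fun i => if i = 0 then 1 else 0) ∧
        -- γ lies on X_k
        (∀ t ∈ Set.Ioo (-ε) ε,
          (γ t 2) ^ 2 = γ t 0 * ((γ t 1) ^ 4 + (γ t 0) ^ (2 * k)))) := by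
  exact ⟨part1 k hk hk1, part2 k hk hk1⟩
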